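/- Let 𝔤 be a finite-dimensional Lie algebra over a field F of characteristic zero whose nilpotent radical 𝔫 is a Heisenberg algebra with center 𝔷 = [𝔫,𝔫] contained in the center of 𝔤. Fix a Levi decomposition 𝔤 = 𝔩 ⊕ 𝔫 and an 𝔩-invariant complement V of 𝔷 in 𝔫. For nonzero α ∈ 𝔷*, set Y_α = {γ ∈ 𝔤* : γ|_𝔷 = α} and S_α = {γ ∈ 𝔤* : γ(V)=0, γ|_𝔷 = α}. Then for every γ ∈ Y_α, the orbit of γ under the coadjoint action of the Heisenberg group N intersects S_α in exactly one point. -/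

import Mathlib

/-- Suppose the nilpotent radical 𝔫 of 𝔤 is a Heisenberg
algebra whose centre 𝔷 = F·z is central in 𝔤, with a Levi decomposition
𝔤 = 𝔩 ⊕ 𝔫 and an 𝔩-invariant complement V of 𝔷 in 𝔫.  For a nonzero
α ∈ 𝔷* (encoded by c = α(z) ≠ 0), every coadjoint N-orbit of a point of
Y_α = {γ : γ(z) = c} meets S_α = {γ : γ(V) = 0, γ(z) = c} in exactly one
point.  (Since N is two-step nilpotent with centre acting trivially, the
coadjoint action of exp η is γ ∘ (1 + ad η + ½ (ad η)²).) -/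
theorem heisenberg_orbit_meets_section_uniquely
    (F : Type*) [Field F] [CharZero F]
    (g : Type*) [LieRing g] [LieAlgebra F g] [Module.Finite F g]
    (n : LieIdeal F g)
    -- 𝔫 is the nilpotent radical
    [LieModule.IsNilpotent n n]
    (hnilrad : ∀ I : LieIdeal F g, LieModule.IsNilpotent I I → I ≤ n)
    -- Heisenberg structure: z spans [𝔫,𝔫] and is central in 𝔤
    (z : g) (hzn : z ∈ n)
    (hzcentral : ∀ x : g, ⁅x, z⁆ = (0 : g))
    (hbr : ∀ x ∈ n, ∀ y ∈ n, ∃ t : F, ⁅x, y⁆ = t • z)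
    -- V : complement of 𝔷 = F·z in 𝔫, with nondegenerate induced pairing
    (V : Submodule F g) (hVn : V ≤ (n : Submodule F g))
    (hcompl : V ⊔ Submodule.span F {z} = (n : Submodule F g))
    (hdisj : V ⊓ Submodule.span F {z} = ⊥)
    (hnondeg : ∀ v ∈ V, v ≠ 0 → ∃ w ∈ V, ⁅v, w⁆ ≠ (0 : g))
    -- Levi decomposition 𝔤 = 𝔩 ⊕ 𝔫 with V 𝔩-invariant
    (l : LieSubalgebra F g)
    (hlevi : IsCompl (l : Submodule F g) (n : Submodule F g))
    (hVinv : ∀ x ∈ l, ∀ v ∈ V, ⁅x, v⁆ ∈ V)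
    -- nonzero α ∈ 𝔷*
    (c : F) (hc : c ≠ 0) :
    ∀ γ : Module.Dual F g, γ z = c →
      ∃! δ : Module.Dual F g,
        (∃ η ∈ n, δ = γ.comp (LinearMap.id
            + (LieAlgebra.ad F g η)
            + (2 : F)⁻¹ • ((LieAlgebra.ad F g η) ∘ₗ (LieAlgebra.ad F g η)))) ∧
        (∀ v ∈ V, δ v = 0) ∧ δ z = c := by
  intro γ hγz
  have hz0 : ∀ x : g, ⁅z, x⁆ = (0 : g) := fun x => by
    rw [← neg_eq_zero, lie_skew, hzcentral]
  -- double brackets inside n vanish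
  have hnn : ∀ a ∈ n, ∀ b ∈ n, ⁅a, ⁅a, b⁆⁆ = (0 : g) := by
    intro a ha b hb
    obtain ⟨t, ht⟩ := hbr a ha b hb
    rw [ht, lie_smul, hzcentral, smul_zero]
  -- the pairing on V induced by γ∘bracket
  let Trest : ↥V →ₗ[F] Module.Dual F ↥V :=
    { toFun := fun u => (γ.comp (LieAlgebra.ad F g u.1)).comp V.subtype
      map_add' := by
        intro a b; ext v
        simp [LieAlgebra.ad_apply, add_lie]
      map_smul' := by
        intro t a; ext v
        simp [LieAlgebra.ad_apply, smul_lie] }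
  have hTrest : ∀ (u v : ↥V), Trest u v = γ ⁅(u : g), (v : g)⁆ := fun u v => rfl
  have hVfd : FiniteDimensional F ↥V := inferInstance
  have hinj : Function.Injective Trest := by
    rw [injective_iff_map_eq_zero]
    intro u hu
    by_contra hne
    have hu0 : (u : g) ≠ 0 := by
      simpa [Submodule.coe_eq_zero] using fun h => hne (by exact_mod_cast h)
    obtain ⟨w, hwV, hw⟩ := hnondeg u u.2 hu0
    obtain ⟨t, ht⟩ := hbr u (hVn u.2) w (hVn hwV)
    have : γ ⁅(u : g), w⁆ = 0 := by
      have := congrArg (fun f => f ⟨w, hwV⟩) hu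
      simpa [hTrest] using this
    rw [ht, map_smul, hγz, smul_eq_mul] at this
    have ht0 : t = 0 := by
      rcases mul_eq_zero.mp this with h | h
      · exact h
      · exact absurd h hc
    exact hw (by rw [ht, ht0, zero_smul])
  have hsurj : Function.Surjective Trest :=
    (LinearMap.injective_iff_surjective_of_finrank_eq_finrank
      Subspace.dual_finrank_eq.symm).mp hinj
  -- solve for η
  obtain ⟨η₀, hη₀⟩ := hsurj (-(γ.comp V.subtype))
  set η : g := (η₀ : g) with hηdef
  have hηV : η ∈ V := η₀.2
  have hηn : η ∈ n := hVn hηV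
  have hηeq : ∀ v : ↥V, γ ⁅η, (v : g)⁆ = -γ (v : g) := by
    intro v
    have := congrArg (fun f => f v) hη₀
    simpa [hTrest] using this
  -- the value of the transformed functional
  have hval : ∀ (ξ : g), ξ ∈ n → ∀ x : g,
      (γ.comp (LinearMap.id + (LieAlgebra.ad F g ξ)
        + (2 : F)⁻¹ • ((LieAlgebra.ad F g ξ) ∘ₗ (LieAlgebra.ad F g ξ)))) x
      = γ x + γ ⁅ξ, x⁆ + (2 : F)⁻¹ * γ ⁅ξ, ⁅ξ, x⁆⁆ := by
    intro ξ hξ x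
    simp [LieAlgebra.ad_apply, mul_comm]
  refine ⟨γ.comp (LinearMap.id + (LieAlgebra.ad F g η)
      + (2 : F)⁻¹ • ((LieAlgebra.ad F g η) ∘ₗ (LieAlgebra.ad F g η))),
    ⟨⟨η, hηn, rfl⟩, ?_, ?_⟩, ?_⟩
  · intro v hv
    rw [hval η hηn v]
    rw [hnn η hηn v (hVn hv), hηeq ⟨v, hv⟩]
    simp
  · rw [hval η hηn z, hzcentral η, lie_zero, map_zero, hγz]
    ring
  · -- uniqueness
    rintro δ' ⟨⟨η', hη'n, rfl⟩, hδ'V, hδ'z⟩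
    -- decompose η' = v' + s • z
    have hη'mem : η' ∈ V ⊔ Submodule.span F {z} := by rw [hcompl]; exact hη'n
    obtain ⟨v', hv'V, w, hw, hvw⟩ := Submodule.mem_sup.mp hη'mem
    obtain ⟨s, rfl⟩ := Submodule.mem_span_singleton.mp hw
    have hbrk : ∀ x : g, ⁅η', x⁆ = ⁅v', x⁆ := by
      intro x
      rw [← hvw, add_lie, smul_lie, hz0, smul_zero, add_zero]
    have hv'n : v' ∈ n := hVn hv'V
    -- v' pairs the same way as η on V
    have hsame : Trest ⟨v', hv'V⟩ = -(γ.comp V.subtype) := by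
      ext v
      have h0 := hδ'V v v.2
      rw [hval η' hη'n v, hbrk, hbrk, hnn v' hv'n v (hVn v.2), map_zero,
        mul_zero, add_zero] at h0
      have : γ ⁅v', (v : g)⁆ = -γ (v : g) := by linear_combination h0
      simp [hTrest, this]
    have hv'η : v' = η := by
      have := hinj (hsame.trans hη₀.symm)
      exact congrArg Subtype.val this
    -- hence the functionals agree
    ext x
    rw [hval η' hη'n x, hval η hηn x, hbrk, hbrk, hv'η]
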